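/- For all integers k ≥ 1 and s ≥ 1, setting μ = 15 + 2k + s, the following inequality of rational numbers holds: (7/8 − 3/2)² + (11/8 − 3/2)² + (13/8 − 3/2)² + (17/8 − 3/2)² + ∑_{u=1}^{2k+7} ((u + 2k + 8)/(2(k+4)) − 3/2)² + ∑_{v=1}^{s+4} ((2v + 2s + 7)/(2(s+4)) − 3/2)² ≤ (μ/12)·(17/8 − 7/8). -/
import Mathlib

lemma sumid (n : ℕ) : ∑ u ∈ Finset.Icc 1 n, (u : ℚ) = n * (n + 1) / 2 := by
  induction n with
  | zero => simp
  | succ m ih =>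
    rw [Finset.sum_Icc_succ_top (by omega), ih]
    push_cast; ring

lemma sumsq' (n : ℕ) : ∑ u ∈ Finset.Icc 1 n, (u : ℚ) ^ 2 = n * (n + 1) * (2 * n + 1) / 6 := by
  induction n with
  | zero => simp
  | succ m ih =>
    rw [Finset.sum_Icc_succ_top (by omega), ih]
    push_cast; ring

lemma sumaff (n : ℕ) (a b : ℚ) :
    ∑ u ∈ Finset.Icc 1 n, (a * u + b) ^ 2 =
      a ^ 2 * (n * (n + 1) * (2 * n + 1) / 6) + 2 * a * b * (n * (n + 1) / 2) + n * b ^ 2 := by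
  have h1 := sumid n
  have h2 := sumsq' n
  have : ∑ u ∈ Finset.Icc 1 n, (a * u + b) ^ 2 =
      ∑ u ∈ Finset.Icc 1 n, (a ^ 2 * (u : ℚ) ^ 2 + 2 * a * b * u + b ^ 2) := by
    apply Finset.sum_congr rfl; intro u _; ring
  rw [this]
  rw [Finset.sum_add_distrib, Finset.sum_add_distrib, ← Finset.mul_sum, ← Finset.mul_sum,
    Finset.sum_const, Nat.card_Icc, h1, h2]
  simp only [nsmul_eq_mul]
  push_cast [Nat.add_sub_cancel]
  ring

theorem stmt_6 (k s : ℕ) (hk : 1 ≤ k) (hs : 1 ≤ s) :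
    ((7/8 : ℚ) - 3/2) ^ 2 +
      ((11/8 : ℚ) - 3/2) ^ 2 +
      ((13/8 : ℚ) - 3/2) ^ 2 +
      ((17/8 : ℚ) - 3/2) ^ 2 +
      ∑ u ∈ Finset.Icc 1 (2 * k + 7), (((u : ℚ) + 2 * (k : ℚ) + 8) / (2 * ((k : ℚ) + 4)) - 3/2) ^ 2 +
      ∑ v ∈ Finset.Icc 1 (s + 4), ((2 * (v : ℚ) + 2 * (s : ℚ) + 7) / (2 * ((s : ℚ) + 4)) - 3/2) ^ 2
    ≤ ((15 + 2 * (k : ℚ) + (s : ℚ)) / 12) * (17/8 - 7/8) := by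
  have hkp : (0 : ℚ) < (k : ℚ) + 4 := by positivity
  have hsp : (0 : ℚ) < (s : ℚ) + 4 := by positivity
  have hk1 : (1 : ℚ) ≤ (k : ℚ) := by exact_mod_cast hk
  have hs1 : (1 : ℚ) ≤ (s : ℚ) := by exact_mod_cast hs
  have e1 : ∑ u ∈ Finset.Icc 1 (2 * k + 7),
      (((u : ℚ) + 2 * (k : ℚ) + 8) / (2 * ((k : ℚ) + 4)) - 3/2) ^ 2 =
      ∑ u ∈ Finset.Icc 1 (2 * k + 7),
      ((1 / (2 * ((k : ℚ) + 4))) * u + (-1/2)) ^ 2 := by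
    apply Finset.sum_congr rfl; intro u _
    congr 1
    field_simp
    ring
  have e2 : ∑ v ∈ Finset.Icc 1 (s + 4),
      ((2 * (v : ℚ) + 2 * (s : ℚ) + 7) / (2 * ((s : ℚ) + 4)) - 3/2) ^ 2 =
      ∑ v ∈ Finset.Icc 1 (s + 4),
      ((1 / ((s : ℚ) + 4)) * v + (-((s : ℚ) + 5) / (2 * ((s : ℚ) + 4)))) ^ 2 := by
    apply Finset.sum_congr rfl; intro v _
    congr 1
    field_simp
    ring
  rw [e1, e2, sumaff, sumaff]
  have key : (0 : ℚ) ≤ (2 * (k : ℚ) * ((k : ℚ) + 4) * ((s : ℚ) + 4)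
      + (s : ℚ) * ((k : ℚ) + 4) * ((s : ℚ) + 4) + 4 * ((k : ℚ) + 4) - 4 * ((s : ℚ) + 4))
      / (48 * (((k : ℚ) + 4) * ((s : ℚ) + 4))) := by
    apply div_nonneg _ (by positivity)
    nlinarith [mul_pos hkp hsp]
  have hrw : (2 * (k : ℚ) * ((k : ℚ) + 4) * ((s : ℚ) + 4)
      + (s : ℚ) * ((k : ℚ) + 4) * ((s : ℚ) + 4) + 4 * ((k : ℚ) + 4) - 4 * ((s : ℚ) + 4))
      / (48 * (((k : ℚ) + 4) * ((s : ℚ) + 4))) =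
      ((15 + 2 * (k : ℚ) + (s : ℚ)) / 12) * (17/8 - 7/8) -
      (((7/8 : ℚ) - 3/2) ^ 2 + ((11/8 : ℚ) - 3/2) ^ 2 + ((13/8 : ℚ) - 3/2) ^ 2 +
        ((17/8 : ℚ) - 3/2) ^ 2 +
        ((1 / (2 * ((k : ℚ) + 4))) ^ 2 * (((2*k+7 : ℕ) : ℚ) * (((2*k+7 : ℕ) : ℚ) + 1) * (2 * ((2*k+7 : ℕ) : ℚ) + 1) / 6)
          + 2 * (1 / (2 * ((k : ℚ) + 4))) * (-1/2) * (((2*k+7 : ℕ) : ℚ) * (((2*k+7 : ℕ) : ℚ) + 1) / 2)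
          + ((2*k+7 : ℕ) : ℚ) * (-1/2) ^ 2 +
        ((1 / ((s : ℚ) + 4)) ^ 2 * (((s+4 : ℕ) : ℚ) * (((s+4 : ℕ) : ℚ) + 1) * (2 * ((s+4 : ℕ) : ℚ) + 1) / 6)
          + 2 * (1 / ((s : ℚ) + 4)) * (-((s : ℚ) + 5) / (2 * ((s : ℚ) + 4))) * (((s+4 : ℕ) : ℚ) * (((s+4 : ℕ) : ℚ) + 1) / 2)
          + ((s+4 : ℕ) : ℚ) * (-((s : ℚ) + 5) / (2 * ((s : ℚ) + 4))) ^ 2))) := by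
    push_cast
    field_simp
    ring
  linarith [hrw ▸ key]
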